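/- Let A and B be k-vector spaces with semilinear actions of a group G over a field k, where B has trivial G-action. Then (A ⊗_k B)^G ≅ A^G ⊗_k B. -/

import Mathlib

open scoped TensorProduct

/-- Let `A` and `B` be `k`-vector spaces with `k`-linear actions of a group `G`,
the action on `B` being trivial. Then `(A ⊗_k B)^G ≅ A^G ⊗_k B`. -/
theorem invariants_tensor_trivial (k : Type*) [Field k] (G : Type*) [Group G]
    (A B : Type*) [AddCommGroup A] [Module k A] [AddCommGroup B] [Module k B]
    (ρ : Representation k G A) :
    Nonempty (((ρ.tprod (Representation.trivial k (G := G) (V := B))).invariants)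
      ≃ₗ[k] (TensorProduct k ρ.invariants B)) := by
  classical
  set τ := ρ.tprod (Representation.trivial k (G := G) (V := B)) with hτ
  let b := Module.Basis.ofVectorSpace k B
  set ι := Module.Basis.ofVectorSpaceIndex k B with hι
  let e : TensorProduct k A B ≃ₗ[k] (ι →₀ A) :=
    (LinearEquiv.lTensor A b.repr).trans (TensorProduct.finsuppScalarRight k k A ι)
  -- equivariance of e
  have he : ∀ (g : G) (x : TensorProduct k A B),
      e (τ g x) = Finsupp.mapRange.linearMap (ρ g) (e x) := by
    intro g x
    have : (e.toLinearMap ∘ₗ (τ g)) = (Finsupp.mapRange.linearMap (ρ g)) ∘ₗ e.toLinearMap := by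
      apply TensorProduct.ext'
      intro a c
      simp only [LinearMap.comp_apply, LinearEquiv.coe_coe, hτ]
      have h1 : (ρ.tprod (Representation.trivial k (G := G) (V := B))) g (a ⊗ₜ c)
          = (ρ g a) ⊗ₜ c := by
        simp [Representation.tprod, Representation.trivial_apply]
      rw [h1]
      ext i
      simp [e, TensorProduct.finsuppScalarRight_apply_tmul_apply]
    simpa using congrArg (fun f => f x) this
  -- the natural map
  let f0 : TensorProduct k ρ.invariants B →ₗ[k] TensorProduct k A B :=
    TensorProduct.map ρ.invariants.subtype LinearMap.id
  have hmem : ∀ x, f0 x ∈ τ.invariants := by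
    intro x
    rw [Representation.mem_invariants]
    intro g
    induction x using TensorProduct.induction_on with
    | zero => simp
    | tmul a c =>
        have : f0 (a ⊗ₜ c) = (a : A) ⊗ₜ c := rfl
        rw [this, hτ]
        have h1 : (ρ.tprod (Representation.trivial k (G := G) (V := B))) g ((a : A) ⊗ₜ c)
            = (ρ g (a : A)) ⊗ₜ c := by
          simp [Representation.tprod, Representation.trivial_apply]
        rw [h1, a.2 g]
    | add x y hx hy => simp [map_add, hx, hy]
  let φ : TensorProduct k ρ.invariants B →ₗ[k] τ.invariants :=
    f0.codRestrict τ.invariants hmem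
  have hinj : Function.Injective φ := by
    have h0 : Function.Injective f0 := by
      have := Module.Flat.rTensor_preserves_injective_linearMap
        (M := B) (R := k) ρ.invariants.subtype (Submodule.injective_subtype _)
      simpa [f0, LinearMap.rTensor] using this
    intro x y hxy
    apply h0
    have := congrArg (Subtype.val) hxy
    simpa [φ] using this
  have hsurj : Function.Surjective φ := by
    rintro ⟨x, hx⟩
    rw [Representation.mem_invariants] at hx
    have hcoord : ∀ i, e x i ∈ ρ.invariants := by
      intro i
      rw [Representation.mem_invariants]
      intro g
      have := he g x
      rw [hx g] at this
      have := congrArg (fun f => f i) this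
      simpa using this.symm
    refine ⟨∑ i ∈ (e x).support, (⟨e x i, hcoord i⟩ : ρ.invariants) ⊗ₜ b i, ?_⟩
    apply Subtype.ext
    have hφ : (φ (∑ i ∈ (e x).support, (⟨e x i, hcoord i⟩ : ρ.invariants) ⊗ₜ b i) : TensorProduct k A B)
        = ∑ i ∈ (e x).support, (e x i) ⊗ₜ b i := by
      simp [φ, f0, TensorProduct.map_tmul, map_sum]
    rw [hφ]
    -- now show x = ∑ (e x i) ⊗ b i
    have hsymm : ∀ (i : ι) (a : A), e.symm (Finsupp.single i a) = a ⊗ₜ b i := by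
      intro i a
      simp only [e, LinearEquiv.trans_symm, LinearEquiv.trans_apply,
        TensorProduct.finsuppScalarRight_symm_apply_single]
      simp [LinearEquiv.lTensor, Module.Basis.repr_symm_apply]
    have key : e.symm (e x) = ∑ i ∈ (e x).support, (e x i) ⊗ₜ b i := by
      conv_lhs => rw [← Finsupp.sum_single (e x)]
      rw [Finsupp.sum, map_sum]
      exact Finset.sum_congr rfl fun i _ => hsymm i (e x i)
    exact key.symm.trans (e.symm_apply_apply x)
  exact ⟨(LinearEquiv.ofBijective φ ⟨hinj, hsurj⟩).symm⟩
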